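/- For d×d complex matrices X_1,…,X_k and j ∈ {1,…,k}, if j ≠ k then tr_{1…(k-1)}[(k…1)^{T_j} (X_1 ⊗ ⋯ ⊗ X_k)] = X_1 ⋯ X_j^T ⋯ X_{k-1} X_k, and if j = k then it equals (X_1 ⋯ X_{k-1})^T X_k, where (k…1) = (1…k)^{-1} is a cyclic permutation operator on (ℂ^d)^{⊗k} and T_j is the partial transpose on factor j. -/

import Mathlib

open Matrix

/-- The permutation operator of the cycle `(k…1) = (1…k)⁻¹` on `(ℂ^d)^{⊗k}`,
with `k = n + 1`. -/
noncomputable def cycleDownOp (d n : ℕ) :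
    Matrix (Fin (n + 1) → Fin d) (Fin (n + 1) → Fin d) ℂ :=
  Matrix.of fun i j => if ∀ t, i t = j (t + 1) then 1 else 0

/-- Partial transpose on the tensor factor `p`. -/
noncomputable def ptAt {d n : ℕ} (p : Fin n)
    (M : Matrix (Fin n → Fin d) (Fin n → Fin d) ℂ) :
    Matrix (Fin n → Fin d) (Fin n → Fin d) ℂ :=
  Matrix.of fun i j => M (Function.update i p (j p)) (Function.update j p (i p))

/-- Tensor product `X₁ ⊗ ⋯ ⊗ X_k` on `(ℂ^d)^{⊗k}`. -/
noncomputable def kronFam {d n : ℕ} (X : Fin n → Matrix (Fin d) (Fin d) ℂ) :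
    Matrix (Fin n → Fin d) (Fin n → Fin d) ℂ :=
  Matrix.of fun i j => ∏ t, X t (i t) (j t)

/-- Partial trace over all tensor factors except the last. -/
noncomputable def ptrExceptLast {d n : ℕ}
    (M : Matrix (Fin (n + 1) → Fin d) (Fin (n + 1) → Fin d) ℂ) :
    Matrix (Fin d) (Fin d) ℂ :=
  Matrix.of fun a b => ∑ v : Fin n → Fin d, M (Fin.snoc v a) (Fin.snoc v b)

/-- tr_{1…(k-1)}[(k…1)^{T_j} (X₁ ⊗ ⋯ ⊗ X_k)] equals
`X₁ ⋯ X_jᵀ ⋯ X_k` if `j ≠ k`, and `(X₁ ⋯ X_{k-1})ᵀ X_k` if `j = k`. -/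


lemma snoc_sub_one {α : Type*} {ℓ : ℕ} (v : Fin ℓ → α) (a : α) (s : Fin (ℓ+1)) :
    (Fin.snoc v a : Fin (ℓ+1) → α) (s - 1) = (Fin.cons a v : Fin (ℓ+1) → α) s := by
  induction s using Fin.cases with
  | zero =>
    have h : (0 : Fin (ℓ+1)) - 1 = Fin.last ℓ :=
      (eq_sub_of_add_eq (Fin.last_add_one ℓ)).symm
    rw [h, Fin.snoc_last, Fin.cons_zero]
  | succ r =>
    have h : r.succ - 1 = r.castSucc := (eq_sub_of_add_eq Fin.coeSucc_eq_succ).symm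
    rw [h, Fin.snoc_castSucc, Fin.cons_succ]

lemma cons_snoc_castSucc {α : Type*} {ℓ : ℕ} (a b : α) (u : Fin ℓ → α) (s : Fin (ℓ+1)) :
    (Fin.cons a (Fin.snoc u b : Fin (ℓ+1) → α) : Fin (ℓ+2) → α) s.castSucc = (Fin.cons a u : Fin (ℓ+1) → α) s := by
  induction s using Fin.cases with
  | zero => rw [Fin.castSucc_zero, Fin.cons_zero, Fin.cons_zero]
  | succ r => rw [← Fin.succ_castSucc, Fin.cons_succ, Fin.cons_succ, Fin.snoc_castSucc]

lemma snoc_update_ne {α : Type*} {ℓ : ℕ} (u : Fin ℓ → α) (q : Fin ℓ) (w b : α)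
    (t : Fin (ℓ+1)) (h : t ≠ q.castSucc) :
    (Fin.snoc (Function.update u q w) b : Fin (ℓ+1) → α) t = (Fin.snoc u b : Fin (ℓ+1) → α) t := by
  induction t using Fin.lastCases with
  | last => rw [Fin.snoc_last, Fin.snoc_last]
  | cast s =>
    have hs : s ≠ q := fun hh => h (by rw [hh])
    rw [Fin.snoc_castSucc, Fin.snoc_castSucc, Function.update_of_ne hs]

lemma cons_update_ne {α : Type*} {ℓ : ℕ} (u : Fin ℓ → α) (q : Fin ℓ) (w a : α)
    (t : Fin (ℓ+1)) (h : t ≠ q.succ) :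
    (Fin.cons a (Function.update u q w) : Fin (ℓ+1) → α) t = (Fin.cons a u : Fin (ℓ+1) → α) t := by
  induction t using Fin.cases with
  | zero => rw [Fin.cons_zero, Fin.cons_zero]
  | succ s =>
    have hs : s ≠ q := fun hh => h (by rw [hh])
    rw [Fin.cons_succ, Fin.cons_succ, Function.update_of_ne hs]


lemma fin_sub_one_ne {m : ℕ} (p : Fin (m+2)) : p - 1 ≠ p := by
  intro h
  have h2 : p = p + 1 := sub_eq_iff_eq_add.mp h
  exact one_ne_zero (left_eq_add.mp h2)

lemma fin_add_one_ne {m : ℕ} (p : Fin (m+2)) : p + 1 ≠ p := by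
  intro h
  exact one_ne_zero (left_eq_add.mp h.symm)

lemma sum_l {d m : ℕ} (p : Fin (m+2)) (i : Fin (m+2) → Fin d)
    (f : (Fin (m+2) → Fin d) → ℂ) :
    (∑ l : Fin (m+2) → Fin d,
      (if ∀ t, Function.update i p (l p) t = Function.update l p (i p) (t+1) then (1:ℂ) else 0)
        * f l)
    = if i (p-1) = i p then
        ∑ c : Fin d, f (fun t => if t = p ∨ t = p+1 then c else i (t-1)) else 0 := by
  set L : Fin d → (Fin (m+2) → Fin d) :=
    fun c t => if t = p ∨ t = p+1 then c else i (t-1) with hL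
  have hLp : ∀ c, L c p = c := fun c => by simp [hL]
  have hiff : ∀ l : Fin (m+2) → Fin d,
      (∀ t, Function.update i p (l p) t = Function.update l p (i p) (t+1))
        ↔ (i (p-1) = i p ∧ l = L (l p)) := by
    intro l
    constructor
    · intro h
      constructor
      · have h1 := h (p - 1)
        rwa [Function.update_of_ne (fin_sub_one_ne p), sub_add_cancel,
          Function.update_self] at h1
      · funext t
        by_cases htp : t = p
        · subst htp; simp [hL]
        · by_cases htp1 : t = p + 1
          · subst htp1
            have h1 := h p
            rw [Function.update_self, Function.update_of_ne (fin_add_one_ne p)] at h1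
            simp [hL, h1, fin_add_one_ne p]
          · have h1 := h (t - 1)
            have ht1 : t - 1 ≠ p := by
              intro hc
              exact htp1 (by rw [← hc, sub_add_cancel])
            rw [Function.update_of_ne ht1, sub_add_cancel,
              Function.update_of_ne htp] at h1
            simp [hL, htp, htp1, ← h1]
    · rintro ⟨hip, hl⟩
      have hex : ∃ c, l = L c := ⟨l p, hl⟩
      obtain ⟨c, rfl⟩ := hex
      rw [hLp]
      intro t
      by_cases htp : t = p
      · subst htp
        rw [Function.update_self, Function.update_of_ne (fin_add_one_ne t)]
        simp [hL, fin_add_one_ne t]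
      · rw [Function.update_of_ne htp]
        by_cases ht1p : t + 1 = p
        · rw [ht1p, Function.update_self]
          rw [show t = p - 1 from by rw [← ht1p]; exact (add_sub_cancel_right t 1).symm]
          exact hip
        · rw [Function.update_of_ne ht1p]
          have h2 : t + 1 ≠ p + 1 := by
            intro hc; exact htp (add_right_cancel hc)
          simp [hL, ht1p, h2]
  by_cases hip : i (p-1) = i p
  · rw [if_pos hip]
    calc (∑ l : Fin (m+2) → Fin d,
        (if ∀ t, Function.update i p (l p) t = Function.update l p (i p) (t+1)
          then (1:ℂ) else 0) * f l)
        = ∑ l : Fin (m+2) → Fin d, (if l = L (l p) then f l else 0) := by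
          refine Finset.sum_congr rfl fun l _ => ?_
          simp only [hiff l, hip, true_and]
          split <;> simp
      _ = ∑ l : Fin (m+2) → Fin d, ∑ c : Fin d,
            (if c = l p then (if l = L c then f l else 0) else 0) := by
          refine Finset.sum_congr rfl fun l _ => ?_
          rw [Finset.sum_ite_eq' Finset.univ (l p)
            (fun c => if l = L c then f l else 0)]
          simp
      _ = ∑ c : Fin d, ∑ l : Fin (m+2) → Fin d,
            (if c = l p then (if l = L c then f l else 0) else 0) := Finset.sum_comm
      _ = ∑ c : Fin d, f (L c) := by
          refine Finset.sum_congr rfl fun c _ => ?_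
          have h3 : ∀ l : Fin (m+2) → Fin d,
              (if c = l p then (if l = L c then f l else 0) else 0)
                = (if l = L c then f l else 0) := by
            intro l
            by_cases hc : l = L c
            · subst hc; rw [hLp]; simp
            · simp [hc]
          simp_rw [h3]
          rw [Finset.sum_ite_eq' Finset.univ (L c) f]
          simp
  · rw [if_neg hip]
    apply Finset.sum_eq_zero
    intro l _
    rw [if_neg, zero_mul]
    rw [hiff l]
    tauto


lemma listProd_apply {d : ℕ} (b : Fin d) :
    ∀ (n : ℕ) (Y : Fin (n+1) → Matrix (Fin d) (Fin d) ℂ) (a : Fin d),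
      (List.ofFn Y).prod a b = ∑ v : Fin n → Fin d, ∏ t : Fin (n+1),
        Y t ((Fin.cons a (Fin.snoc v b) : Fin (n+2) → Fin d) t.castSucc)
            ((Fin.snoc v b : Fin (n+1) → Fin d) t)
  | 0, Y, a => by
      simp [List.ofFn_succ]
      rw [show (0:Fin 1) = Fin.last 0 from rfl, Fin.snoc_last]
  | (n+1), Y, a => by
      rw [List.ofFn_succ, List.prod_cons, Matrix.mul_apply]
      have IH := listProd_apply b n (fun t => Y t.succ)
      calc ∑ x, Y 0 a x * (List.ofFn fun t => Y t.succ).prod x b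
          = ∑ x, ∑ v' : Fin n → Fin d, Y 0 a x * ∏ t : Fin (n+1),
              Y t.succ ((Fin.cons x (Fin.snoc v' b) : Fin (n+2) → Fin d) t.castSucc)
                ((Fin.snoc v' b : Fin (n+1) → Fin d) t) := by
            simp_rw [IH, Finset.mul_sum]
        _ = ∑ p : Fin d × (Fin n → Fin d), Y 0 a p.1 * ∏ t : Fin (n+1),
              Y t.succ ((Fin.cons p.1 (Fin.snoc p.2 b) : Fin (n+2) → Fin d) t.castSucc)
                ((Fin.snoc p.2 b : Fin (n+1) → Fin d) t) := by
            rw [Fintype.sum_prod_type]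
        _ = ∑ v : Fin (n+1) → Fin d, ∏ t : Fin (n+2),
              Y t ((Fin.cons a (Fin.snoc v b) : Fin (n+3) → Fin d) t.castSucc)
                ((Fin.snoc v b : Fin (n+2) → Fin d) t) := by
            apply Fintype.sum_equiv (Fin.consEquiv fun _ => Fin d)
            intro p
            have hv : ((Fin.consEquiv fun _ => Fin d) p : Fin (n+1) → Fin d)
                = Fin.cons p.1 p.2 := rfl
            rw [hv]
            have hkey : (Fin.snoc (Fin.cons p.1 p.2) b : Fin (n+2) → Fin d)
                = Fin.cons p.1 (Fin.snoc p.2 b) := (Fin.cons_snoc_eq_snoc_cons _ _ _).symm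
            rw [hkey]
            conv_rhs => rw [Fin.prod_univ_succ]
            refine congrArg₂ (· * ·) (by simp) (Finset.prod_congr rfl fun t _ => ?_)
            rw [← Fin.succ_castSucc, Fin.cons_succ, Fin.cons_succ]

noncomputable def pairSwap {d m : ℕ} (q : Fin (m+1)) :
    ((Fin (m+1) → Fin d) × Fin d) ≃ ((Fin (m+1) → Fin d) × Fin d) where
  toFun z := (Function.update z.1 q z.2, z.1 q)
  invFun z := (Function.update z.1 q z.2, z.1 q)
  left_inv z := by
    obtain ⟨v, c⟩ := z
    simp only [Prod.mk.injEq, Function.update_self]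
    constructor
    · funext t
      by_cases h : t = q
      · subst h; simp
      · simp [h]
    · trivial
  right_inv z := by
    obtain ⟨v, c⟩ := z
    simp only [Prod.mk.injEq, Function.update_self]
    constructor
    · funext t
      by_cases h : t = q
      · subst h; simp
      · simp [h]
    · trivial

noncomputable def snocEquiv (d m : ℕ) : ((Fin m → Fin d) × Fin d) ≃ (Fin (m+1) → Fin d) where
  toFun z := Fin.snoc z.1 z.2
  invFun v := (Fin.init v, v (Fin.last m))
  left_inv z := by
    obtain ⟨u, x⟩ := z
    simp
  right_inv v := Fin.snoc_init_self v


theorem ptrace_pt_cycle_down (d n : ℕ) (X : Fin (n + 1) → Matrix (Fin d) (Fin d) ℂ)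
    (j : Fin (n + 1)) :
    (j ≠ Fin.last n →
      ptrExceptLast (ptAt j (cycleDownOp d n) * kronFam X) =
        (List.ofFn fun t : Fin (n + 1) => if t = j then (X t)ᵀ else X t).prod) ∧
    (j = Fin.last n →
      ptrExceptLast (ptAt j (cycleDownOp d n) * kronFam X) =
        (List.ofFn fun t : Fin n => X t.castSucc).prodᵀ * X (Fin.last n)) := by
  revert X j
  cases n with
  | zero =>
    intro X j
    have hj0 : j = Fin.last 0 := by
      have h := j.isLt
      have h2 : j.val = 0 := by omega
      exact Fin.ext (by rw [h2, Fin.val_last])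
    constructor
    · intro hj; exact absurd hj0 hj
    · intro _
      subst hj0
      ext a b
      simp only [List.ofFn_zero, List.prod_nil, Matrix.transpose_one, Matrix.one_mul]
      simp only [ptrExceptLast, ptAt, cycleDownOp, kronFam, Matrix.mul_apply, Matrix.of_apply]
      rw [Fintype.sum_subsingleton _ (Fin.elim0 : Fin 0 → Fin d)]
      rw [← Equiv.sum_comp (Equiv.funUnique (Fin 1) (Fin d)).symm]
      simp [Equiv.funUnique, Fin.forall_fin_one]
      have h0 : (Fin.last 0) = (0 : Fin 1) := rfl
      have ha : (Fin.snoc Fin.elim0 a : Fin 1 → Fin d) 0 = a := rfl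
      have hb : (Fin.snoc Fin.elim0 b : Fin 1 → Fin d) 0 = b := rfl
      rw [ha, hb]
  | succ m =>
    intro X j
    constructor
    · intro hj
      obtain ⟨q, rfl⟩ := Fin.exists_castSucc_eq.mpr hj
      ext a b
      rw [listProd_apply b (m+1) _ a]
      simp only [ptrExceptLast, ptAt, cycleDownOp, kronFam, Matrix.mul_apply, Matrix.of_apply]
      simp only [sum_l]
      have hite : ∀ (P : Prop) [Decidable P] (g : Fin d → ℂ),
          (if P then ∑ c : Fin d, g c else 0) = ∑ c : Fin d, if P then g c else 0 := by
        intro P _ g; split <;> simp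
      simp only [hite]
      rw [← Fintype.sum_prod_type']
      rw [← Equiv.sum_comp (pairSwap (d := d) q)]
      rw [Fintype.sum_prod_type]
      refine Finset.sum_congr rfl fun u _ => ?_
      show (∑ c' : Fin d, _) = _
      have hne1 : (q.castSucc : Fin (m+2)) ≠ q.succ := (Fin.castSucc_lt_succ (i := q)).ne
      have hcu : ∀ c' : Fin d,
          (Fin.cons a (Function.update u q c') : Fin (m+2) → Fin d) q.castSucc
            = (Fin.cons a u : Fin (m+2) → Fin d) q.castSucc :=
        fun c' => cons_update_ne u q c' a q.castSucc hne1
      simp only [pairSwap, Equiv.coe_fn_mk, snoc_sub_one, Fin.snoc_castSucc,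
        Function.update_self, hcu]
      rw [Finset.sum_ite_eq Finset.univ ((Fin.cons a u : Fin (m+2) → Fin d) q.castSucc)]
      simp only [Finset.mem_univ, if_true]
      refine Finset.prod_congr rfl fun t _ => ?_
      set w₀ := (Fin.cons a u : Fin (m+2) → Fin d) q.castSucc with hw
      by_cases h1 : t = q.castSucc
      · subst h1
        rw [if_pos rfl, if_pos (Or.inl rfl), Matrix.transpose_apply]
        rw [Fin.snoc_castSucc, Function.update_self, Fin.snoc_castSucc]
        rw [show (q.castSucc).castSucc = ((q.castSucc : Fin (m+2)).castSucc) from rfl]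
        rw [cons_snoc_castSucc]
      · rw [if_neg h1]
        by_cases h2 : t = q.castSucc + 1
        · rw [if_pos (Or.inr h2)]
          have ht : t = q.succ := by rw [h2, Fin.coeSucc_eq_succ]
          congr 1
          · rw [ht, cons_snoc_castSucc, Fin.cons_succ]
          · exact snoc_update_ne u q w₀ b t h1
        · rw [if_neg (by tauto)]
          congr 1
          · have ht2 : t ≠ q.succ := by rw [← Fin.coeSucc_eq_succ]; exact h2
            rw [cons_update_ne u q w₀ a t ht2, cons_snoc_castSucc]
          · exact snoc_update_ne u q w₀ b t h1
    · intro hj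
      subst hj
      ext a b
      rw [Matrix.mul_apply]
      simp only [Matrix.transpose_apply]
      simp_rw [listProd_apply a m (fun t => X t.castSucc)]
      simp only [ptrExceptLast, ptAt, cycleDownOp, kronFam, Matrix.mul_apply, Matrix.of_apply]
      simp only [sum_l]
      have hite : ∀ (P : Prop) [Decidable P] (g : Fin d → ℂ),
          (if P then ∑ c : Fin d, g c else 0) = ∑ c : Fin d, if P then g c else 0 := by
        intro P _ g; split <;> simp
      simp only [hite]
      have hp1 : (Fin.last (m+1)) - 1 = (Fin.last m).castSucc := by
        have h := Fin.coeSucc_eq_succ (a := Fin.last m)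
        rw [Fin.succ_last] at h
        exact (eq_sub_of_add_eq h).symm
      have hp2 : (Fin.last (m+1)) + 1 = 0 := Fin.last_add_one (m+1)
      simp only [hp1, hp2, Fin.snoc_castSucc, Fin.snoc_last]
      rw [← Equiv.sum_comp (snocEquiv d m)]
      rw [Fintype.sum_prod_type]
      simp only [snocEquiv, Equiv.coe_fn_mk, Fin.snoc_last]
      simp only [← hite]
      simp only [Finset.sum_ite_eq' Finset.univ a, Finset.mem_univ, if_true]
      rw [Finset.sum_comm]
      refine Finset.sum_congr rfl fun c _ => ?_
      rw [Finset.sum_mul]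
      refine Finset.sum_congr rfl fun u _ => ?_
      rw [Fin.prod_univ_castSucc]
      congr 1
      · refine Finset.prod_congr rfl fun s _ => ?_
        have hne : (s.castSucc : Fin (m+2)) ≠ Fin.last (m+1) := (Fin.castSucc_lt_last s).ne
        rw [Fin.snoc_castSucc, cons_snoc_castSucc]
        congr 1
        rw [if_congr (or_iff_right hne) rfl rfl]
        by_cases hs : s = 0
        · subst hs
          rw [if_pos Fin.castSucc_zero, Fin.cons_zero]
        · have hcs : (s.castSucc : Fin (m+2)) ≠ 0 := by
            simpa [Fin.castSucc_eq_zero_iff] using hs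
          rw [if_neg hcs, snoc_sub_one, cons_snoc_castSucc]
          obtain ⟨r, rfl⟩ := Fin.eq_succ_of_ne_zero hs
          rw [Fin.cons_succ, Fin.cons_succ]
      · rw [if_pos (Or.inl rfl), Fin.snoc_last]
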